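/- For any separable Banach space X, the set 𝓤𝓔(X) of uniformly ergodic operators on X is a Borel set in L(X) equipped with the σ-algebra σ(S_op) generated by the strong operator topology. -/
import Mathlib


open Filter Topology MeasureTheory

/-- The `n`-th Cesàro mean `A_n = (1/n) ∑_{k<n} T^k` of an operator `T`. -/
noncomputable def cesaroMean {X : Type*} [NormedAddCommGroup X] [NormedSpace ℝ X]
    (T : X →L[ℝ] X) (n : ℕ) : X →L[ℝ] X :=
  (n : ℝ)⁻¹ • ∑ k ∈ Finset.range n, T ^ k

/-- The strong operator topology on `L(X)`: the topology of pointwise convergence,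
induced from the product topology on `X → X`. -/
def sot (X : Type*) [NormedAddCommGroup X] [NormedSpace ℝ X] : TopologicalSpace (X →L[ℝ] X) :=
  TopologicalSpace.induced (fun T => (T : X → X)) Pi.topologicalSpace

/-- `T` is Cesàro-bounded if the norms of its Cesàro means are uniformly bounded. -/
def CesaroBounded {X : Type*} [NormedAddCommGroup X] [NormedSpace ℝ X]
    (T : X →L[ℝ] X) : Prop :=
  ∃ M : ℝ, ∀ n : ℕ, ‖cesaroMean T n‖ ≤ M

/-- `T` is ergodic if for every `x` the sequence of Cesàro means at `x` converges in norm. -/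
def IsErgodicOp {X : Type*} [NormedAddCommGroup X] [NormedSpace ℝ X]
    (T : X →L[ℝ] X) : Prop :=
  ∀ x : X, ∃ y : X, Tendsto (fun n => cesaroMean T n x) atTop (𝓝 y)

/-- `T` is uniformly ergodic if the sequence of Cesàro means converges in operator norm. -/
def IsUniformlyErgodicOp {X : Type*} [NormedAddCommGroup X] [NormedSpace ℝ X]
    (T : X →L[ℝ] X) : Prop :=
  ∃ L : X →L[ℝ] X, Tendsto (fun n => cesaroMean T n) atTop (𝓝 L)

/-- Condition (NSE): there are `ε > 0` and a strictly increasing sequence `j` such that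
for every `m` some `x` in the unit ball satisfies `‖A_{j_p} x - A_{j_{p+1}} x‖ > ε`
for all `p ≤ m`. -/
def NSE {X : Type*} [NormedAddCommGroup X] [NormedSpace ℝ X]
    (T : X →L[ℝ] X) : Prop :=
  ∃ ε > (0 : ℝ), ∃ j : ℕ → ℕ, StrictMono j ∧
    ∀ m : ℕ, ∃ x : X, ‖x‖ ≤ 1 ∧
      ∀ p ≤ m, ε < ‖cesaroMean T (j p) x - cesaroMean T (j (p + 1)) x‖

/-- The tree `𝒜_e(T, ε)`: finite strictly increasing sequences `s` of naturals such that
`|s| ≤ 1` or some `x` in the unit ball satisfies `‖A_{s_p} x - A_{s_{p+1}} x‖ > ε`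
for all consecutive pairs of entries of `s`. -/
def ergoTree {X : Type*} [NormedAddCommGroup X] [NormedSpace ℝ X]
    (T : X →L[ℝ] X) (ε : ℝ) : Set (List ℕ) :=
  {s | s.Chain' (· < ·) ∧ (s.length ≤ 1 ∨ ∃ x : X, ‖x‖ ≤ 1 ∧
    ∀ p : ℕ, p + 1 < s.length →
      ε < ‖cesaroMean T (s.getD p 0) x - cesaroMean T (s.getD (p + 1) 0) x‖)}

/-- A tree on `ℕ` (a set of finite sequences) is well-founded if it has no infinite branch. -/
def TreeWF (𝒜 : Set (List ℕ)) : Prop :=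
  ¬ ∃ J : ℕ → ℕ, ∀ m : ℕ, (List.range m).map J ∈ 𝒜

/-- The relation "is a proper extension of", restricted to the nodes of the tree `𝒜`. -/
def treeRel (𝒜 : Set (List ℕ)) : List ℕ → List ℕ → Prop :=
  fun t s => s ∈ 𝒜 ∧ t ∈ 𝒜 ∧ s <+: t ∧ s ≠ t

open Classical in
/-- The height of a well-founded tree: the ordinal rank of the relation
"is a proper extension of" on its nodes, evaluated at the empty sequence
(and `0` by convention if that relation is not well-founded). -/
noncomputable def treeHeight (𝒜 : Set (List ℕ)) : Ordinal :=
  if h : WellFounded (treeRel 𝒜) then (h.apply []).rank else 0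

section Aux
variable {X : Type*} [NormedAddCommGroup X] [NormedSpace ℝ X]

lemma meas_apply (c : X) :
    @Measurable _ _ (@borel _ (sot X)) (borel X) (fun T : X →L[ℝ] X => T c) := by
  letI t : TopologicalSpace (X →L[ℝ] X) := sot X
  letI m : MeasurableSpace (X →L[ℝ] X) := borel _
  haveI : BorelSpace (X →L[ℝ] X) := ⟨rfl⟩
  borelize X
  have hc : Continuous (fun T : X →L[ℝ] X => T c) := by
    have h1 : Continuous (fun T : X →L[ℝ] X => (T : X → X)) := continuous_induced_dom
    exact (continuous_apply c).comp h1
  exact hc.measurable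

lemma meas_eval_countable {g : (X →L[ℝ] X) → X}
    (hg : @Measurable _ _ (@borel _ (sot X)) (borel X) g)
    (hcr : (Set.range g).Countable) :
    @Measurable _ _ (@borel _ (sot X)) (borel X) (fun T => T (g T)) := by
  borelize X
  intro U hU
  have key : (fun T : X →L[ℝ] X => T (g T)) ⁻¹' U
      = ⋃ c ∈ Set.range g, (g ⁻¹' {c}) ∩ ((fun T : X →L[ℝ] X => T c) ⁻¹' U) := by
    ext T
    simp only [Set.mem_preimage, Set.mem_iUnion, Set.mem_inter_iff, Set.mem_singleton_iff,
      Set.mem_range, exists_prop]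
    constructor
    · intro h; exact ⟨g T, ⟨T, rfl⟩, rfl, h⟩
    · rintro ⟨c, _, hc, h⟩; rw [hc]; exact h
  rw [key]
  exact MeasurableSet.biUnion hcr fun c _ =>
    (hg (measurableSet_singleton c)).inter (meas_apply c hU)

lemma meas_eval [TopologicalSpace.SeparableSpace X] {g : (X →L[ℝ] X) → X}
    (hg : @Measurable _ _ (@borel _ (sot X)) (borel X) g) :
    @Measurable _ _ (@borel _ (sot X)) (borel X) (fun T => T (g T)) := by
  borelize X
  haveI : SecondCountableTopology X := UniformSpace.secondCountable_of_separable X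
  letI m : MeasurableSpace (X →L[ℝ] X) := @borel _ (sot X)
  have hsm : StronglyMeasurable g := hg.stronglyMeasurable
  have happrox : ∀ n : ℕ, Measurable (fun T : X →L[ℝ] X => T (hsm.approx n T)) := by
    intro n
    exact meas_eval_countable (hsm.approx n).measurable (hsm.approx n).finite_range.countable
  apply measurable_of_tendsto_metrizable happrox
  rw [tendsto_pi_nhds]
  intro T
  exact ((T.continuous.tendsto _).comp (hsm.tendsto_approx T))
end Aux

section Aux2
variable {X : Type*} [NormedAddCommGroup X] [NormedSpace ℝ X] [TopologicalSpace.SeparableSpace X]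

lemma meas_pow (k : ℕ) (x : X) :
    @Measurable _ _ (@borel _ (sot X)) (borel X) (fun T : X →L[ℝ] X => (T ^ k) x) := by
  induction k with
  | zero => simpa using @measurable_const X _ (borel X) (@borel _ (sot X)) x
  | succ k ih =>
      have : (fun T : X →L[ℝ] X => (T ^ (k+1)) x) = fun T : X →L[ℝ] X => T ((T ^ k) x) := by
        funext T
        rw [pow_succ']
        rfl
      rw [this]
      exact meas_eval ih

lemma meas_cesaro (n : ℕ) (x : X) :
    @Measurable _ _ (@borel _ (sot X)) (borel X) (fun T : X →L[ℝ] X => cesaroMean T n x) := by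
  borelize X
  haveI : SecondCountableTopology X := UniformSpace.secondCountable_of_separable X
  letI m : MeasurableSpace (X →L[ℝ] X) := @borel _ (sot X)
  have : (fun T : X →L[ℝ] X => cesaroMean T n x)
      = fun T : X →L[ℝ] X => (n : ℝ)⁻¹ • ∑ k ∈ Finset.range n, (T ^ k) x := by
    funext T
    simp [cesaroMean, ContinuousLinearMap.sum_apply]
  rw [this]
  exact (Finset.measurable_sum _ fun k _ => meas_pow k x).const_smul _
end Aux2

section Char
variable {X : Type*} [NormedAddCommGroup X] [NormedSpace ℝ X] [CompleteSpace X]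
  [TopologicalSpace.SeparableSpace X]

/-- A dense sequence in `X`. -/
noncomputable def dseq (X : Type*) [NormedAddCommGroup X] [NormedSpace ℝ X]
    [TopologicalSpace.SeparableSpace X] : ℕ → X :=
  @TopologicalSpace.denseSeq X _ _ ⟨(0:X)⟩

lemma denseRange_dseq : DenseRange (dseq X) :=
  @TopologicalSpace.denseRange_denseSeq X _ _ ⟨(0:X)⟩

lemma uec_iff (T : X →L[ℝ] X) :
    IsUniformlyErgodicOp T ↔ ∀ k : ℕ, ∃ N : ℕ, ∀ n ≥ N, ∀ m ≥ N, ∀ i : ℕ,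
      ‖cesaroMean T n (dseq X i) - cesaroMean T m (dseq X i)‖
        ≤ ((k : ℝ) + 1)⁻¹ * ‖dseq X i‖ := by
  set u := dseq X with hu
  constructor
  · rintro ⟨L, hL⟩ k
    have hc : CauchySeq (fun n => cesaroMean T n) := hL.cauchySeq
    have hε : (0:ℝ) < ((k : ℝ) + 1)⁻¹ := by positivity
    obtain ⟨N, hN⟩ := Metric.cauchySeq_iff.1 hc _ hε
    refine ⟨N, fun n hn m hm i => ?_⟩
    have h1 : ‖cesaroMean T n - cesaroMean T m‖ ≤ ((k : ℝ) + 1)⁻¹ :=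
      le_of_lt (by simpa [dist_eq_norm] using hN n hn m hm)
    calc ‖cesaroMean T n (u i) - cesaroMean T m (u i)‖
        = ‖(cesaroMean T n - cesaroMean T m) (u i)‖ := by rw [ContinuousLinearMap.sub_apply]
      _ ≤ ‖cesaroMean T n - cesaroMean T m‖ * ‖u i‖ := (cesaroMean T n - cesaroMean T m).le_opNorm _
      _ ≤ ((k : ℝ) + 1)⁻¹ * ‖u i‖ := mul_le_mul_of_nonneg_right h1 (norm_nonneg _)
  · intro h
    have hc : CauchySeq (fun n => cesaroMean T n) := by
      rw [Metric.cauchySeq_iff]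
      intro ε hε
      obtain ⟨k, hk⟩ := exists_nat_one_div_lt hε
      obtain ⟨N, hN⟩ := h k
      refine ⟨N, fun n hn m hm => ?_⟩
      rw [dist_eq_norm]
      have hb : ‖cesaroMean T n - cesaroMean T m‖ ≤ ((k : ℝ) + 1)⁻¹ := by
        refine ContinuousLinearMap.opNorm_le_bound _ (by positivity) fun x => ?_
        have hcl : IsClosed {x : X | ‖(cesaroMean T n - cesaroMean T m) x‖
            ≤ ((k : ℝ) + 1)⁻¹ * ‖x‖} :=
          isClosed_le (continuous_norm.comp (cesaroMean T n - cesaroMean T m).continuous)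
            (continuous_const.mul continuous_norm)
        have hsub : Set.range u ⊆ {x : X | ‖(cesaroMean T n - cesaroMean T m) x‖
            ≤ ((k : ℝ) + 1)⁻¹ * ‖x‖} := by
          rintro _ ⟨i, rfl⟩
          simpa [ContinuousLinearMap.sub_apply] using hN n hn m hm i
        have hx : x ∈ {x : X | ‖(cesaroMean T n - cesaroMean T m) x‖
            ≤ ((k : ℝ) + 1)⁻¹ * ‖x‖} := by
          have := hcl.closure_subset_iff.2 hsub
          rw [denseRange_dseq.closure_eq] at this
          exact this (Set.mem_univ x)
        exact hx
      calc ‖cesaroMean T n - cesaroMean T m‖ ≤ ((k : ℝ) + 1)⁻¹ := hb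
        _ = 1 / ((k : ℝ) + 1) := (one_div _).symm
        _ < ε := hk
    obtain ⟨L, hL⟩ := cauchySeq_tendsto_of_complete hc
    exact ⟨L, hL⟩
end Char

/-- For a separable Banach space `X`, the set of uniformly ergodic operators is Borel in
`L(X)` with the σ-algebra generated by the strong operator topology. -/
theorem stmt_5 (X : Type*) [NormedAddCommGroup X] [NormedSpace ℝ X] [CompleteSpace X]
    [TopologicalSpace.SeparableSpace X] :
    @MeasurableSet (X →L[ℝ] X) (@borel _ (sot X))
      {T : X →L[ℝ] X | IsUniformlyErgodicOp T} := by
  borelize X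
  haveI : SecondCountableTopology X := UniformSpace.secondCountable_of_separable X
  letI m : MeasurableSpace (X →L[ℝ] X) := @borel _ (sot X)
  have key : {T : X →L[ℝ] X | IsUniformlyErgodicOp T}
      = ⋂ k : ℕ, ⋃ N : ℕ, ⋂ n : ℕ, ⋂ (_ : n ≥ N), ⋂ m' : ℕ, ⋂ (_ : m' ≥ N), ⋂ i : ℕ,
        {T : X →L[ℝ] X | ‖cesaroMean T n (dseq X i) - cesaroMean T m' (dseq X i)‖
          ≤ ((k : ℝ) + 1)⁻¹ * ‖dseq X i‖} := by
    ext T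
    simp only [Set.mem_setOf_eq, Set.mem_iInter, Set.mem_iUnion]
    exact uec_iff T
  rw [key]
  refine MeasurableSet.iInter fun k => MeasurableSet.iUnion fun N =>
    MeasurableSet.iInter fun n => MeasurableSet.iInter fun _ =>
    MeasurableSet.iInter fun m' => MeasurableSet.iInter fun _ =>
    MeasurableSet.iInter fun i => ?_
  exact measurableSet_le (((meas_cesaro n (dseq X i)).sub (meas_cesaro m' (dseq X i))).norm)
    measurable_const
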